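/- Let G be a countable group acting measure-preservingly on a standard probability space (X, μ) such that almost every point has trivial stabilizer. Let Q ⊆ G be a finite symmetric set containing 1. Then for every Borel set B ⊆ X with μ(B) > 0 there exists a Borel set A ⊆ B with μ(A) > 0 such that gA ∩ A = ∅ for every g ∈ Q² \ {1}. -/

import Mathlib

open Set Pointwise

/-- `S` is `Q`-spaced: right translates `Qg` for distinct `g ∈ S` are disjoint. -/
def Spaced {G : Type*} [Group G] (Q S : Set G) : Prop :=
  ∀ g ∈ S, ∀ h ∈ S, g ≠ h → Disjoint (Q * ({g} : Set G)) (Q * ({h} : Set G))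

/-- `S` is `Q`-syndetic: `⋃_{g ∈ S} Qg = G`. -/
def Syndetic {G : Type*} [Group G] (Q S : Set G) : Prop :=
  ∀ x : G, ∃ g ∈ S, x ∈ Q * ({g} : Set G)

/-- `S` is a maximal `Q`-spaced set. -/
def MaxSpaced {G : Type*} [Group G] (Q S : Set G) : Prop :=
  Spaced Q S ∧ ∀ T : Set G, Spaced Q T → S ⊆ T → T = S


open MeasureTheory

theorem stmt6 {G : Type*} [Group G] [Countable G]
    {X : Type*} [MeasurableSpace X] [StandardBorelSpace X]
    (μ : Measure X) [IsProbabilityMeasure μ]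
    (a : G → X → X) (hmeas : ∀ g, Measurable (a g))
    (hmp : ∀ g, MeasurePreserving (a g) μ μ)
    (hcomp : ∀ g h x, a g (a h x) = a (g * h) x) (hid : ∀ x, a 1 x = x)
    (hfree : ∀ᵐ x ∂μ, ∀ g : G, g ≠ 1 → a g x ≠ x)
    (Q : Set G) (hQfin : Q.Finite) (hQsym : ∀ q ∈ Q, q⁻¹ ∈ Q) (hQone : (1 : G) ∈ Q)
    (B : Set X) (hB : MeasurableSet B) (hBpos : 0 < μ B) :
    ∃ A : Set X, MeasurableSet A ∧ A ⊆ B ∧ 0 < μ A ∧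
      ∀ g ∈ Q * Q, g ≠ 1 → Disjoint (a g '' A) A := by
  classical
  -- The finite set of "bad" group elements.
  set F : Set G := (Q * Q) \ {1} with hFdef
  have hFfin : F.Finite := (hQfin.mul hQfin).diff
  have : Finite ↥F := hFfin.to_subtype
  -- A countable separating family of measurable sets, closed under complements.
  obtain ⟨S, hScount, hSmeas, hSsep⟩ :=
    exists_countable_separating X MeasurableSet Set.univ
  set S' : Set (Set X) := S ∪ (compl '' S) with hS'def
  have hS'count : S'.Countable := hScount.union (hScount.image _)
  have : Countable ↥S' := hS'count.to_subtype
  have hS'meas : ∀ s ∈ S', MeasurableSet s := by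
    rintro s (hs | ⟨t, ht, rfl⟩)
    · exact hSmeas s hs
    · exact (hSmeas t ht).compl
  have hsep : ∀ x y : X, x ≠ y → ∃ s ∈ S', x ∈ s ∧ y ∉ s := by
    intro x y hxy
    by_contra h
    push_neg at h
    refine hxy (hSsep x (mem_univ x) y (mem_univ y) fun s hs => ?_)
    constructor
    · exact fun hx => h s (Or.inl hs) hx
    · intro hy
      by_contra hx
      exact (h sᶜ (Or.inr ⟨s, hs, rfl⟩) hx) hy
  -- For each choice function φ, a candidate set.
  set C : (↥F → ↥S') → Set X := fun φ =>
    B ∩ ⋂ g : ↥F, ((φ g : Set X) ∩ (a (g : G)) ⁻¹' ((φ g : Set X))ᶜ) with hCdef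
  have hCmeas : ∀ φ, MeasurableSet (C φ) := by
    intro φ
    refine hB.inter (MeasurableSet.iInter fun g => ?_)
    exact (hS'meas _ (φ g).2).inter ((hmeas _) (hS'meas _ (φ g).2).compl)
  -- The bad (non-free) points form a null set.
  set N : Set X := {x | ¬ ∀ g : G, g ≠ 1 → a g x ≠ x} with hNdef
  have hN : μ N = 0 := by
    rw [ae_iff] at hfree
    exact hfree
  have hBN : 0 < μ (B \ N) := by
    rwa [measure_diff_null hN]
  -- Every free point of B lies in some C φ.
  have hcover : B \ N ⊆ ⋃ φ, C φ := by
    rintro x ⟨hxB, hxN⟩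
    have hxfree : ∀ g : G, g ≠ 1 → a g x ≠ x := not_not.mp hxN
    have hex : ∀ g : ↥F, ∃ s : ↥S', x ∈ (s : Set X) ∧ a (g : G) x ∉ (s : Set X) := by
      rintro ⟨g, hgQQ, hg1⟩
      have hne : x ≠ a g x := (hxfree g hg1).symm
      obtain ⟨s, hsS', hxs, hys⟩ := hsep x (a g x) hne
      exact ⟨⟨s, hsS'⟩, hxs, hys⟩
    choose φ h1 h2 using hex
    refine mem_iUnion.2 ⟨φ, hxB, mem_iInter.2 fun g => ⟨h1 g, h2 g⟩⟩
  -- Some C φ has positive measure.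
  have hexφ : ∃ φ, 0 < μ (C φ) := by
    by_contra h
    push_neg at h
    have hz : ∀ φ, μ (C φ) = 0 := fun φ => le_antisymm (h φ) zero_le
    have hU : μ (⋃ φ, C φ) = 0 := measure_iUnion_null hz
    have hle : μ (B \ N) = 0 :=
      le_antisymm (hU ▸ measure_mono hcover) zero_le
    exact hBN.ne' hle
  obtain ⟨φ, hφpos⟩ := hexφ
  refine ⟨C φ, hCmeas φ, inter_subset_left, hφpos, ?_⟩
  intro g hgQQ hg1
  have hgF : g ∈ F := ⟨hgQQ, hg1⟩
  rw [Set.disjoint_left]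
  rintro y ⟨x, hxA, rfl⟩ hyA
  have hx := mem_iInter.1 hxA.2 ⟨g, hgF⟩
  have hy := mem_iInter.1 hyA.2 ⟨g, hgF⟩
  exact hx.2 hy.1
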